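/- Let α ≥ 1 and j ∈ {1,...,10}, and let z ∈ ℤ_11 with z ≡ 2/√5 + j·11^{2α−1} (mod 11^{2α}), where √5 ≡ 7 (mod 11). Then the polynomial f_z(y) = y^2 − √5·z·y + 1 has no root in ℤ_11. -/

import Mathlib

instance : Fact (Nat.Prime 11) := ⟨by norm_num⟩

private lemma val_mul' (x y : ℤ_[11]) (hx : x ≠ 0) (hy : y ≠ 0) :
    (x * y).valuation = x.valuation + y.valuation := by
  exact PadicInt.valuation_mul hx hy

private lemma val_unit' (x : ℤ_[11]) (hx : IsUnit x) : x.valuation = 0 := by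
  have hx1 := PadicInt.isUnit_iff.mp hx
  have hx0 : x ≠ 0 := by intro h; rw [h] at hx1; simp at hx1
  have h2 := PadicInt.norm_eq_zpow_neg_valuation hx0
  rw [hx1] at h2
  have h3 : ((11 : ℝ)) ^ (-(x.valuation : ℤ)) = (11 : ℝ) ^ (0 : ℤ) := by simpa using h2.symm
  have h4 := zpow_right_injective₀ (by norm_num : (0:ℝ) < 11) (by norm_num : (11:ℝ) ≠ 1) h3
  omega

/-- For `α ≥ 1`, `1 ≤ j ≤ 10`, and `z ≡ 2/√5 + j·11^(2α−1) (mod 11^(2α))` (with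
`√5 ≡ 7 mod 11`), the polynomial `f_z(y) = y² − √5·z·y + 1` has no root in `ℤ_11`. -/
theorem stmt_15 (α : ℕ) (hα : 1 ≤ α) (j : ℕ) (hj1 : 1 ≤ j) (hj10 : j ≤ 10)
    (s : ℤ_[11]) (hs : s ^ 2 = 5) (hs7 : (11 : ℤ_[11]) ∣ (s - 7))
    (w : ℤ_[11]) (hw : s * w = 2)
    (z : ℤ_[11])
    (hz : (11 : ℤ_[11]) ^ (2 * α) ∣ (z - (w + (j : ℤ_[11]) * 11 ^ (2 * α - 1)))) :
    ∀ y : ℤ_[11], y ^ 2 - s * z * y + 1 ≠ 0 := by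
  intro y hy
  obtain ⟨t, ht⟩ := hz
  set β := 2 * α - 1 with hβdef
  have hβ1 : 2 * α = β + 1 := by omega
  rw [hβ1] at ht
  have h11ne : (11 : ℤ_[11]) ≠ 0 := by
    exact_mod_cast (Nat.cast_ne_zero (R := ℤ_[11])).mpr (by norm_num : (11:ℕ) ≠ 0)
  have hcast : (((11 : ℕ)) : ℤ_[11]) = (11 : ℤ_[11]) := by norm_num
  -- s is a unit
  have hsu : IsUnit s := by
    rw [PadicInt.isUnit_iff]
    rcases lt_or_eq_of_le (PadicInt.norm_le_one s) with h | h
    · exfalso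
      have hdvd : (11 : ℤ_[11]) ∣ s := by
        have := (PadicInt.norm_lt_one_iff_dvd s).mp h
        rwa [hcast] at this
      obtain ⟨c, hc⟩ := hs7
      obtain ⟨d, hd⟩ := hdvd
      have h7 : (((11 : ℕ)) : ℤ_[11]) ∣ (((7 : ℤ)) : ℤ_[11]) := by
        rw [hcast]
        exact ⟨d - c, by push_cast; linear_combination hd - hc⟩
      have := (PadicInt.norm_lt_one_iff_dvd _).mpr h7
      rw [PadicInt.norm_int_lt_one_iff_dvd] at this
      norm_num at this
    · exact h
  -- 11*t + j is a unit
  have hju : IsUnit (11 * t + (j : ℤ_[11])) := by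
    rw [PadicInt.isUnit_iff]
    rcases lt_or_eq_of_le (PadicInt.norm_le_one (11 * t + (j : ℤ_[11]))) with h | h
    · exfalso
      have hdvd := (PadicInt.norm_lt_one_iff_dvd _).mp h
      rw [hcast] at hdvd
      obtain ⟨c, hc⟩ := hdvd
      have hjd : (((11 : ℕ)) : ℤ_[11]) ∣ (((j : ℤ)) : ℤ_[11]) := by
        rw [hcast]
        exact ⟨c - t, by push_cast; linear_combination hc⟩
      have := (PadicInt.norm_lt_one_iff_dvd _).mpr hjd
      rw [PadicInt.norm_int_lt_one_iff_dvd] at this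
      have : (11 : ℤ) ∣ (j : ℤ) := by exact_mod_cast this
      omega
    · exact h
  -- y is a unit
  have hyu : IsUnit y := IsUnit.of_mul_eq_one (a := y) (s * z - y) (by linear_combination -hy)
  -- the key factorization
  have key : (y - 1) ^ 2 = (11 : ℤ_[11]) ^ β * (s * (11 * t + (j : ℤ_[11])) * y) := by
    linear_combination hy + (s * y) * ht + y * hw
  -- the unit factor
  have huu : IsUnit (s * (11 * t + (j : ℤ_[11])) * y) := (hsu.mul hju).mul hyu
  have huu0 : s * (11 * t + (j : ℤ_[11])) * y ≠ 0 := huu.ne_zero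
  have hy1 : y - 1 ≠ 0 := by
    intro h
    rw [h] at key
    simp only [ne_eq, OfNat.ofNat_ne_zero, not_false_eq_true, zero_pow] at key
    exact (mul_ne_zero (pow_ne_zero β h11ne) huu0) key.symm
  -- valuations
  have hvL : ((y - 1) ^ 2).valuation = 2 * (y - 1).valuation := by
    have := val_mul' (y - 1) (y - 1) hy1 hy1
    rw [← sq] at this
    omega
  have hvR : ((11 : ℤ_[11]) ^ β * (s * (11 * t + (j : ℤ_[11])) * y)).valuation = β := by
    have h := PadicInt.valuation_p_pow_mul (p := 11) β _ huu0
    rw [val_unit' _ huu] at h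
    rw [hcast] at h
    omega
  rw [key, hvR] at hvL
  have hnn := Nat.zero_le (y - 1).valuation
  omega
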